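/- Let 𝔫₄ be the 4-dimensional real nilpotent Lie algebra with basis x₁, x₂, x₃, x₄ and only nonzero brackets ⁅x₄, x₃⁆ = x₂, ⁅x₄, x₂⁆ = x₁. Then every derivation D of 𝔫₄ whose underlying linear map has trace zero can be written as D = ad(w) + E, where w ∈ 𝔫₄ and E is the derivation determined by real numbers a, b, c via E(x₁) = 2a·x₁, E(x₂) = −a·x₂, E(x₃) = b·x₁ − 4a·x₃, E(x₄) = c·x₃ + 3a·x₄. -/

import Mathlib

/-- Let `𝔫₄` be the 4-dimensional real nilpotent Lie algebra with
basis `x₁, x₂, x₃, x₄ = b 0, b 1, b 2, b 3` and only nonzero brackets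
`⁅x₄, x₃⁆ = x₂`, `⁅x₄, x₂⁆ = x₁`.  Then every derivation `D` of `𝔫₄` whose underlying
linear map has trace zero can be written as `D = ad(w) + E` where `w ∈ 𝔫₄` and `E` is
the derivation determined by reals `a, β, c` via `E x₁ = 2a·x₁`, `E x₂ = −a·x₂`,
`E x₃ = β·x₁ − 4a·x₃`, `E x₄ = c·x₃ + 3a·x₄`. -/
theorem stmt14
    (L : Type) [LieRing L] [LieAlgebra ℝ L]
    (b : Module.Basis (Fin 4) ℝ L)
    (h32 : ⁅b 3, b 2⁆ = b 1) (h31 : ⁅b 3, b 1⁆ = b 0) (h30 : ⁅b 3, b 0⁆ = 0)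
    (h21 : ⁅b 2, b 1⁆ = 0) (h20 : ⁅b 2, b 0⁆ = 0) (h10 : ⁅b 1, b 0⁆ = 0)
    (D : LieDerivation ℝ L L)
    (htr : LinearMap.trace ℝ L D.toLinearMap = 0) :
    ∃ w : L, ∃ a β c : ℝ,
      D (b 0) = ⁅w, b 0⁆ + (2 * a) • b 0 ∧
      D (b 1) = ⁅w, b 1⁆ + (-a) • b 1 ∧
      D (b 2) = ⁅w, b 2⁆ + β • b 0 + (-(4 * a)) • b 2 ∧
      D (b 3) = ⁅w, b 3⁆ + c • b 2 + (3 * a) • b 3 := by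
  have h23 : ⁅b 2, b 3⁆ = -b 1 := by rw [← lie_skew, h32]
  have h13 : ⁅b 1, b 3⁆ = -b 0 := by rw [← lie_skew, h31]
  have h03 : ⁅b 0, b 3⁆ = 0 := by rw [← lie_skew, h30, neg_zero]
  have h12 : ⁅b 1, b 2⁆ = 0 := by rw [← lie_skew, h21, neg_zero]
  have h02 : ⁅b 0, b 2⁆ = 0 := by rw [← lie_skew, h20, neg_zero]
  have h01 : ⁅b 0, b 1⁆ = 0 := by rw [← lie_skew, h10, neg_zero]
  have hbr3 : ∀ x : L, ⁅b 3, x⁆ = b.repr x 1 • b 0 + b.repr x 2 • b 1 := by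
    intro x
    conv_lhs => rw [← b.sum_repr x]
    rw [Fin.sum_univ_four]
    simp [h30, h31, h32, lie_self]
  have hbr2 : ∀ x : L, ⁅x, b 2⁆ = b.repr x 3 • b 1 := by
    intro x
    conv_lhs => rw [← b.sum_repr x]
    rw [Fin.sum_univ_four]
    simp [h02, h12, h32, lie_self]
  have hbr1 : ∀ x : L, ⁅x, b 1⁆ = b.repr x 3 • b 0 := by
    intro x
    conv_lhs => rw [← b.sum_repr x]
    rw [Fin.sum_univ_four]
    simp [h01, h21, h31, lie_self]
  have hbr0 : ∀ x : L, ⁅x, b 0⁆ = 0 := by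
    intro x
    conv_lhs => rw [← b.sum_repr x]
    rw [Fin.sum_univ_four]
    simp [h10, h20, h30, lie_self]
  have extract : ∀ (x : L) (c0 c1 c2 c3 : ℝ),
      x = c0 • b 0 + c1 • b 1 + c2 • b 2 + c3 • b 3 →
      b.repr x 0 = c0 ∧ b.repr x 1 = c1 ∧ b.repr x 2 = c2 ∧ b.repr x 3 = c3 := by
    intro x c0 c1 c2 c3 hx
    subst hx
    refine ⟨?_, ?_, ?_, ?_⟩ <;>
      simp [map_add, map_smul, Module.Basis.repr_self, Finsupp.single_apply]
  -- derivation equation from ⁅b3, b2⁆ = b1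
  have hE1 : D (b 1) = b.repr (D (b 2)) 1 • b 0
      + (b.repr (D (b 2)) 2 + b.repr (D (b 3)) 3) • b 1
      + (0:ℝ) • b 2 + (0:ℝ) • b 3 := by
    have h := D.apply_lie_eq_add (b 3) (b 2)
    rw [h32, hbr3 (D (b 2)), hbr2 (D (b 3))] at h
    rw [h]; module
  obtain ⟨hr0, hr1, hr2, hr3⟩ := extract (D (b 1)) _ _ _ _ hE1
  -- derivation equation from ⁅b3, b1⁆ = b0
  have hE0 : D (b 0) = (b.repr (D (b 1)) 1 + b.repr (D (b 3)) 3) • b 0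
      + b.repr (D (b 1)) 2 • b 1 + (0:ℝ) • b 2 + (0:ℝ) • b 3 := by
    have h := D.apply_lie_eq_add (b 3) (b 1)
    rw [h31, hbr3 (D (b 1)), hbr1 (D (b 3))] at h
    rw [h]; module
  obtain ⟨hq0, hq1, hq2, hq3⟩ := extract (D (b 0)) _ _ _ _ hE0
  -- s3 = 0 from ⁅b2, b1⁆ = 0
  have hs3 : b.repr (D (b 2)) 3 = 0 := by
    have hz : ⁅b 2, D (b 1)⁆ = 0 := by
      rw [← lie_skew, hbr2, hr3, zero_smul, neg_zero]
    have h := D.apply_lie_eq_add (b 2) (b 1)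
    rw [h21, map_zero, hbr1 (D (b 2)), hz, zero_add] at h
    have h' : (0:L) = b.repr (D (b 2)) 3 • b 0 + (0:ℝ) • b 1 + (0:ℝ) • b 2 + (0:ℝ) • b 3 := by
      rw [← h]; module
    have := (extract 0 _ _ _ _ h').1
    simpa using this.symm
  -- trace
  have htrace : b.repr (D (b 0)) 0 + b.repr (D (b 1)) 1 + b.repr (D (b 2)) 2
      + b.repr (D (b 3)) 3 = 0 := by
    rw [LinearMap.trace_eq_matrix_trace ℝ b D.toLinearMap] at htr
    rw [Matrix.trace] at htr
    simp only [Fin.sum_univ_four, Matrix.diag_apply, LinearMap.toMatrix_apply] at htr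
    simpa using htr
  -- introduce scalars
  set a : ℝ := b.repr (D (b 3)) 3 / 3 with ha
  have ht3 : b.repr (D (b 3)) 3 = 3 * a := by rw [ha]; ring
  have hs2 : b.repr (D (b 2)) 2 = -(4 * a) := by
    rw [hq0, hr1, ht3] at htrace; linarith
  have hr1' : b.repr (D (b 1)) 1 = -a := by rw [hr1, hs2, ht3]; ring
  have hq0' : b.repr (D (b 0)) 0 = 2 * a := by rw [hq0, hr1', ht3]; ring
  refine ⟨(-(b.repr (D (b 3)) 0)) • b 1 + (-(b.repr (D (b 3)) 1)) • b 2
      + b.repr (D (b 2)) 1 • b 3, a, b.repr (D (b 2)) 0, b.repr (D (b 3)) 2,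
      ?_, ?_, ?_, ?_⟩
  · rw [hbr0, hE0, hr1', hr2, ht3]; module
  · rw [hE1]
    simp only [add_lie, smul_lie, lie_self, h21, h31, smul_zero, zero_add, add_zero]
    rw [hs2, ht3]; module
  · conv_lhs => rw [← b.sum_repr (D (b 2)), Fin.sum_univ_four]
    rw [hs2, hs3]
    simp only [add_lie, smul_lie, lie_self, h12, h32, smul_zero, zero_add, add_zero]
    module
  · conv_lhs => rw [← b.sum_repr (D (b 3)), Fin.sum_univ_four]
    rw [ht3]
    simp only [add_lie, smul_lie, lie_self, h13, h23, smul_zero, smul_neg, zero_add, add_zero]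
    module
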